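/- Let G be a graph with an assignment of lists L to its edges, and let v1v2 and w1w2 be two non-adjacent edges of G. If |L(v1v2)|·|L(w1w2)| > Σ_{v_i w_j ∈ E(G)} ⌊|L(v_i w_j)|/2⌋·⌈|L(v_i w_j)|/2⌉ (sum over the at most four edges v_i w_j with i,j ∈ {1,2}), then there exist colours c1 ∈ L(v1v2) and c2 ∈ L(w1w2) that are compatible, i.e. either c1 = c2 or every edge g adjacent to both v1v2 and w1w2 has at most one of c1, c2 in its list L(g). -/
import Mathlib

open SimpleGraph Sum

/-- Two edges of `G` are adjacent if they are distinct edges sharing a vertex. -/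
def EdgeAdj {V : Type*} (G : SimpleGraph V) (e f : Sym2 V) : Prop :=
  e ∈ G.edgeSet ∧ f ∈ G.edgeSet ∧ e ≠ f ∧ ∃ v, v ∈ e ∧ v ∈ f

/-- A proper edge-colouring of `G` choosing each edge's colour from its list. -/
def IsListEdgeColoring {V : Type*} (G : SimpleGraph V) (L : Sym2 V → Finset ℕ)
    (C : Sym2 V → ℕ) : Prop :=
  (∀ e ∈ G.edgeSet, C e ∈ L e) ∧ ∀ e f, EdgeAdj G e f → C e ≠ C f

lemma prodbound (a b n : ℕ) (h : a + b ≤ n) : a * b ≤ n / 2 * ((n + 1) / 2) := by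
  have h4 : 4 * (a * b) ≤ n * n := by
    have h' : (a : ℤ) + b ≤ n := by exact_mod_cast h
    zify
    nlinarith [sq_nonneg ((a : ℤ) - b), h']
  have h5 : n * n ≤ 4 * (n / 2 * ((n + 1) / 2)) + 1 := by
    rcases Nat.even_or_odd n with ⟨q, hq⟩ | ⟨q, hq⟩
    · have e1 : n / 2 = q := by omega
      have e2 : (n + 1) / 2 = q := by omega
      rw [e1, e2, hq]; nlinarith
    · have e1 : n / 2 = q := by omega
      have e2 : (n + 1) / 2 = q + 1 := by omega
      rw [e1, e2, hq]; nlinarith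
  nlinarith

theorem stmt0 {V : Type*} (G : SimpleGraph V) [DecidableRel G.Adj]
    (L : Sym2 V → Finset ℕ) (v₁ v₂ w₁ w₂ : V)
    (he : G.Adj v₁ v₂) (hf : G.Adj w₁ w₂)
    (hne : v₁ ≠ w₁ ∧ v₁ ≠ w₂ ∧ v₂ ≠ w₁ ∧ v₂ ≠ w₂)
    (hineq :
      (if G.Adj v₁ w₁ then (L s(v₁, w₁)).card / 2 * (((L s(v₁, w₁)).card + 1) / 2) else 0) +
      (if G.Adj v₁ w₂ then (L s(v₁, w₂)).card / 2 * (((L s(v₁, w₂)).card + 1) / 2) else 0) +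
      (if G.Adj v₂ w₁ then (L s(v₂, w₁)).card / 2 * (((L s(v₂, w₁)).card + 1) / 2) else 0) +
      (if G.Adj v₂ w₂ then (L s(v₂, w₂)).card / 2 * (((L s(v₂, w₂)).card + 1) / 2) else 0)
        < (L s(v₁, v₂)).card * (L s(w₁, w₂)).card) :
    ∃ c₁ ∈ L s(v₁, v₂), ∃ c₂ ∈ L s(w₁, w₂),
      c₁ = c₂ ∨ ∀ g, EdgeAdj G g s(v₁, v₂) → EdgeAdj G g s(w₁, w₂) →
        ¬(c₁ ∈ L g ∧ c₂ ∈ L g) := by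
  classical
  by_contra hcon
  push_neg at hcon
  set A := L s(v₁, v₂) with hA
  set B := L s(w₁, w₂) with hB
  -- A and B are disjoint
  have hdisj : ∀ c, c ∈ A → c ∉ B := by
    intro c hcA hcB
    exact ((hcon c hcA c hcB).1) rfl
  -- every pair is blocked by some connecting edge
  have hblock : ∀ c₁ ∈ A, ∀ c₂ ∈ B, ∃ g, EdgeAdj G g s(v₁, v₂) ∧ EdgeAdj G g s(w₁, w₂) ∧
      c₁ ∈ L g ∧ c₂ ∈ L g := (fun c₁ h₁ c₂ h₂ => (hcon c₁ h₁ c₂ h₂).2)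
  -- classification of connecting edges
  have hclass : ∀ g, EdgeAdj G g s(v₁, v₂) → EdgeAdj G g s(w₁, w₂) →
      ∃ x y, (x = v₁ ∨ x = v₂) ∧ (y = w₁ ∨ y = w₂) ∧ g = s(x, y) ∧ G.Adj x y := by
    rintro g ⟨hg, -, -, x, hxg, hxe⟩ ⟨-, -, -, y, hyg, hyf⟩
    rw [Sym2.mem_iff] at hxe hyf
    have hxy : x ≠ y := by
      rcases hxe with rfl | rfl <;> rcases hyf with rfl | rfl <;> tauto
    have hgeq : g = s(x, y) := (Sym2.mem_and_mem_iff hxy).mp ⟨hxg, hyg⟩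
    exact ⟨x, y, hxe, hyf, hgeq, by rwa [hgeq, SimpleGraph.mem_edgeSet] at hg⟩
  -- rectangles
  let R : V → V → Finset (ℕ × ℕ) :=
    fun x y => if G.Adj x y then (A ∩ L s(x, y)) ×ˢ (B ∩ L s(x, y)) else ∅
  have hsub : A ×ˢ B ⊆ R v₁ w₁ ∪ R v₁ w₂ ∪ R v₂ w₁ ∪ R v₂ w₂ := by
    intro p hp
    rw [Finset.mem_product] at hp
    obtain ⟨g, hg1, hg2, hc1, hc2⟩ := hblock p.1 hp.1 p.2 hp.2
    obtain ⟨x, y, hx, hy, rfl, hadj⟩ := hclass g hg1 hg2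
    have hmem : p ∈ R x y := by
      simp only [R, if_pos hadj, Finset.mem_product, Finset.mem_inter]
      exact ⟨⟨hp.1, hc1⟩, ⟨hp.2, hc2⟩⟩
    simp only [Finset.mem_union]
    rcases hx with rfl | rfl <;> rcases hy with rfl | rfl <;> tauto
  have hRcard : ∀ x y, (R x y).card ≤
      if G.Adj x y then (L s(x, y)).card / 2 * (((L s(x, y)).card + 1) / 2) else 0 := by
    intro x y
    by_cases hadj : G.Adj x y
    · simp only [R, if_pos hadj, Finset.card_product]
      apply prodbound
      have hd : Disjoint (A ∩ L s(x, y)) (B ∩ L s(x, y)) := by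
        rw [Finset.disjoint_left]
        intro c hc1 hc2
        exact hdisj c (Finset.mem_inter.mp hc1).1 (Finset.mem_inter.mp hc2).1
      calc (A ∩ L s(x, y)).card + (B ∩ L s(x, y)).card
          = ((A ∩ L s(x, y)) ∪ (B ∩ L s(x, y))).card := (Finset.card_union_of_disjoint hd).symm
        _ ≤ (L s(x, y)).card := Finset.card_le_card (by
            intro c hc
            rcases Finset.mem_union.mp hc with h | h <;>
              exact (Finset.mem_inter.mp h).2)
    · simp [R, hadj]
  have hcard : A.card * B.card ≤
      (R v₁ w₁).card + (R v₁ w₂).card + (R v₂ w₁).card + (R v₂ w₂).card := by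
    calc A.card * B.card = (A ×ˢ B).card := (Finset.card_product A B).symm
      _ ≤ (R v₁ w₁ ∪ R v₁ w₂ ∪ R v₂ w₁ ∪ R v₂ w₂).card := Finset.card_le_card hsub
      _ ≤ (R v₁ w₁ ∪ R v₁ w₂ ∪ R v₂ w₁).card + (R v₂ w₂).card := Finset.card_union_le _ _
      _ ≤ (R v₁ w₁ ∪ R v₁ w₂).card + (R v₂ w₁).card + (R v₂ w₂).card := by
          gcongr
          exact Finset.card_union_le _ _
      _ ≤ _ := by
          gcongr
          exact Finset.card_union_le _ _
  have := hRcard v₁ w₁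
  have := hRcard v₁ w₂
  have := hRcard v₂ w₁
  have := hRcard v₂ w₂
  omega
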